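/- For every shape parameter λ > 0, the tail of the skew normal distribution satisfies (1 - F_λ(x)) · x · exp(x²/2) → (2/π)^{1/2} as x → ∞; equivalently, 1 - F_λ(x) is asymptotically equal to 2φ(x)/x as x → ∞. -/

import Mathlib

open Real MeasureTheory Filter Topology

/-- Standard normal density. -/
noncomputable def stdPhi (x : ℝ) : ℝ := (Real.sqrt (2 * Real.pi))⁻¹ * Real.exp (-(x ^ 2) / 2)

/-- Standard normal cdf. -/
noncomputable def stdCdf (x : ℝ) : ℝ := ∫ t in Set.Iic x, stdPhi t

/-- Skew normal density with shape parameter l. -/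
noncomputable def snPdf (l x : ℝ) : ℝ := 2 * stdPhi x * stdCdf (l * x)

/-- Skew normal cdf with shape parameter l. -/
noncomputable def snCdf (l x : ℝ) : ℝ := ∫ t in Set.Iic x, snPdf l t

/-- Gumbel extreme value distribution function. -/
noncomputable def gumbel (x : ℝ) : ℝ := Real.exp (-Real.exp (-x))

open Set

lemma stdPhi_nonneg (x : ℝ) : 0 ≤ stdPhi x := by unfold stdPhi; positivity

lemma stdPhi_even (x : ℝ) : stdPhi (-x) = stdPhi x := by unfold stdPhi; ring_nf

lemma stdPhi_eq : stdPhi = fun x => (Real.sqrt (2 * Real.pi))⁻¹ * Real.exp (-(1/2) * x ^ 2) := by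
  funext x; unfold stdPhi; congr 1; ring

lemma continuous_stdPhi : Continuous stdPhi := by unfold stdPhi; continuity

lemma integrable_stdPhi : Integrable stdPhi := by
  rw [stdPhi_eq]
  exact (integrable_exp_neg_mul_sq (by norm_num)).const_mul _

lemma integral_stdPhi : ∫ x, stdPhi x = 1 := by
  rw [stdPhi_eq]
  rw [MeasureTheory.integral_const_mul, integral_gaussian]
  rw [show (π / (1/2:ℝ)) = 2 * π by ring]
  exact inv_mul_cancel₀ (by positivity)

lemma stdCdf_nonneg (x : ℝ) : 0 ≤ stdCdf x :=
  setIntegral_nonneg measurableSet_Iic fun t _ => stdPhi_nonneg t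

lemma stdCdf_le_one (x : ℝ) : stdCdf x ≤ 1 := by
  rw [← integral_stdPhi]
  exact setIntegral_le_integral integrable_stdPhi (ae_of_all _ fun t => stdPhi_nonneg t)

lemma stdCdf_mono : Monotone stdCdf := fun a b hab =>
  setIntegral_mono_set integrable_stdPhi.integrableOn
    (ae_of_all _ fun t => stdPhi_nonneg t)
    (HasSubset.Subset.eventuallyLE (Iic_subset_Iic.2 hab))

lemma tendsto_stdCdf_atTop : Tendsto stdCdf atTop (𝓝 1) := by
  have h := tendsto_setIntegral_of_monotone (μ := volume) (f := stdPhi)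
    (s := fun x : ℝ => Iic x) (fun x => measurableSet_Iic)
    (fun a b hab => Iic_subset_Iic.2 hab)
    (by rw [Set.iUnion_Iic]; exact integrable_stdPhi.integrableOn)
  show Tendsto (fun x => ∫ t in Iic x, stdPhi t) atTop (𝓝 1)
  simpa [Set.iUnion_Iic, integral_stdPhi] using h

lemma stdCdf_add_neg (x : ℝ) : stdCdf x + stdCdf (-x) = 1 := by
  have h1 : stdCdf (-x) = ∫ t in Ioi x, stdPhi t := by
    rw [stdCdf, show Set.Iic (-x) = Set.Iic (-x) from rfl]
    rw [← neg_neg x, ← integral_comp_neg_Iic, neg_neg]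
    · exact setIntegral_congr_fun measurableSet_Iic fun t _ => (stdPhi_even t).symm ▸ rfl
  rw [h1, stdCdf, intervalIntegral.integral_Iic_add_Ioi
    integrable_stdPhi.integrableOn integrable_stdPhi.integrableOn, integral_stdPhi]

lemma snPdf_nonneg (l x : ℝ) : 0 ≤ snPdf l x :=
  mul_nonneg (mul_nonneg (by norm_num) (stdPhi_nonneg x)) (stdCdf_nonneg _)

lemma measurable_snPdf (l : ℝ) : Measurable (snPdf l) :=
  ((measurable_const.mul continuous_stdPhi.measurable).mul
    (stdCdf_mono.measurable.comp (measurable_id.const_mul l)))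

lemma integrable_snPdf (l : ℝ) : Integrable (snPdf l) := by
  refine ((integrable_stdPhi.const_mul 2).mono'
    (measurable_snPdf l).aestronglyMeasurable (ae_of_all _ fun x => ?_))
  rw [Real.norm_eq_abs, abs_of_nonneg (snPdf_nonneg l x)]
  unfold snPdf
  have h1 := stdCdf_le_one (l * x)
  have h2 := stdPhi_nonneg x
  nlinarith

lemma integral_snPdf (l : ℝ) : ∫ x, snPdf l x = 1 := by
  have hneg : ∫ x, snPdf l (-x) = ∫ x, snPdf l x := integral_neg_eq_self _ _
  have hsum : ∀ x : ℝ, snPdf l x + snPdf l (-x) = 2 * stdPhi x := by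
    intro x
    have h := stdCdf_add_neg (l * x)
    unfold snPdf
    rw [stdPhi_even, show l * -x = -(l * x) by ring]
    nlinarith [stdPhi_nonneg x]
  have h3 : ∫ x, (snPdf l x + snPdf l (-x)) = 2 := by
    have : ∫ x, (snPdf l x + snPdf l (-x)) = ∫ x, 2 * stdPhi x := by
      simp_rw [hsum]
    rw [this, MeasureTheory.integral_const_mul, integral_stdPhi]; norm_num
  rw [integral_add (integrable_snPdf l) ((integrable_snPdf l).comp_neg), hneg] at h3
  linarith

lemma snCdf_tail (l x : ℝ) : 1 - snCdf l x = ∫ t in Ioi x, snPdf l t := by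
  have := intervalIntegral.integral_Iic_add_Ioi (b := x) (μ := volume)
    (integrable_snPdf l).integrableOn (integrable_snPdf l).integrableOn
  rw [integral_snPdf l] at this
  unfold snCdf
  linarith

noncomputable def gaussTail (x : ℝ) : ℝ := ∫ t in Ioi x, Real.exp (-(t ^ 2) / 2)

lemma exp_tendsto_zero : Tendsto (fun t : ℝ => Real.exp (-(t ^ 2) / 2)) atTop (𝓝 0) := by
  apply Real.tendsto_exp_atBot.comp
  have h1 : Tendsto (fun t : ℝ => t ^ 2 / 2) atTop atTop :=
    (tendsto_pow_atTop two_ne_zero).atTop_div_const (by norm_num)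
  have := tendsto_neg_atBot_iff.mpr h1
  refine this.congr fun t => by ring

lemma hasDerivAt_negexp (t : ℝ) :
    HasDerivAt (fun s : ℝ => -Real.exp (-(s ^ 2) / 2)) (t * Real.exp (-(t ^ 2) / 2)) t := by
  have h1 : HasDerivAt (fun s : ℝ => -(s ^ 2) / 2) (-t) t := by
    have := ((hasDerivAt_pow 2 t).neg).div_const 2
    simpa using this.congr_deriv (by ring)
  have h2 := (Real.hasDerivAt_exp (-(t ^ 2) / 2)).comp t h1
  have h3 := h2.neg
  refine h3.congr_deriv ?_
  ring

lemma integral_mul_exp (x : ℝ) (hx : 0 < x) :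
    ∫ t in Ioi x, t * Real.exp (-(t ^ 2) / 2) = Real.exp (-(x ^ 2) / 2) := by
  have h := integral_Ioi_of_hasDerivAt_of_nonneg' (a := x)
    (g := fun s : ℝ => -Real.exp (-(s ^ 2) / 2))
    (g' := fun t => t * Real.exp (-(t ^ 2) / 2))
    (fun t _ => hasDerivAt_negexp t)
    (fun t ht => mul_nonneg (le_of_lt (lt_trans hx ht)) (Real.exp_pos _).le)
    (by simpa using exp_tendsto_zero.neg)
  rw [h]; ring

lemma integrableOn_mul_exp (x : ℝ) (hx : 0 < x) :
    IntegrableOn (fun t : ℝ => t * Real.exp (-(t ^ 2) / 2)) (Ioi x) := by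
  exact integrableOn_Ioi_deriv_of_nonneg' (fun t _ => hasDerivAt_negexp t)
    (fun t ht => mul_nonneg (le_of_lt (lt_trans hx ht)) (Real.exp_pos _).le)
    (by simpa using exp_tendsto_zero.neg)

lemma hasDerivAt_negexp_div (t : ℝ) (ht : 0 < t) :
    HasDerivAt (fun s : ℝ => -Real.exp (-(s ^ 2) / 2) / s)
      ((1 + 1 / t ^ 2) * Real.exp (-(t ^ 2) / 2)) t := by
  have h := (hasDerivAt_negexp t).div (hasDerivAt_id t) (ne_of_gt ht)
  refine h.congr_deriv ?_
  simp only [id]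
  field_simp
  ring

lemma negexp_div_tendsto : Tendsto (fun s : ℝ => -Real.exp (-(s ^ 2) / 2) / s) atTop (𝓝 0) := by
  have h := (exp_tendsto_zero.neg.mul tendsto_inv_atTop_zero)
  simp only [neg_zero, zero_mul] at h
  exact h.congr fun s => (div_eq_mul_inv _ _).symm

lemma integral_one_add_inv_sq (x : ℝ) (hx : 0 < x) :
    ∫ t in Ioi x, (1 + 1 / t ^ 2) * Real.exp (-(t ^ 2) / 2)
      = Real.exp (-(x ^ 2) / 2) / x := by
  have h := integral_Ioi_of_hasDerivAt_of_nonneg' (a := x)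
    (g := fun s : ℝ => -Real.exp (-(s ^ 2) / 2) / s)
    (g' := fun t => (1 + 1 / t ^ 2) * Real.exp (-(t ^ 2) / 2))
    (fun t ht => hasDerivAt_negexp_div t (lt_of_lt_of_le hx ht))
    (fun t _ => by positivity)
    negexp_div_tendsto
  rw [h]; ring

lemma integrableOn_one_add_inv_sq (x : ℝ) (hx : 0 < x) :
    IntegrableOn (fun t : ℝ => (1 + 1 / t ^ 2) * Real.exp (-(t ^ 2) / 2)) (Ioi x) := by
  exact integrableOn_Ioi_deriv_of_nonneg'
    (fun t ht => hasDerivAt_negexp_div t (lt_of_lt_of_le hx ht))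
    (fun t _ => by positivity)
    negexp_div_tendsto

lemma integrable_expsq : Integrable (fun t : ℝ => Real.exp (-(t ^ 2) / 2)) := by
  have h := integrable_exp_neg_mul_sq (b := 1/2) (by norm_num)
  refine h.congr ?_
  exact ae_of_all _ fun t => by norm_num [neg_div]; ring_nf

lemma gaussTail_upper (x : ℝ) (hx : 0 < x) :
    gaussTail x ≤ Real.exp (-(x ^ 2) / 2) / x := by
  have hmono : gaussTail x ≤ ∫ t in Ioi x, x⁻¹ * (t * Real.exp (-(t ^ 2) / 2)) := by
    refine setIntegral_mono_on integrable_expsq.integrableOn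
      ((integrableOn_mul_exp x hx).const_mul _) measurableSet_Ioi fun t ht => ?_
    have htx : x ≤ t := (le_of_lt ht)
    have he := (Real.exp_pos (-(t ^ 2) / 2)).le
    rw [inv_mul_eq_div, le_div_iff₀ hx]
    nlinarith
  calc gaussTail x ≤ _ := hmono
    _ = x⁻¹ * Real.exp (-(x ^ 2) / 2) := by
        rw [MeasureTheory.integral_const_mul, integral_mul_exp x hx]
    _ = Real.exp (-(x ^ 2) / 2) / x := by rw [inv_mul_eq_div]

lemma gaussTail_lower (x : ℝ) (hx : 0 < x) :
    Real.exp (-(x ^ 2) / 2) / x ≤ (1 + 1 / x ^ 2) * gaussTail x := by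
  rw [← integral_one_add_inv_sq x hx]
  have : (1 + 1 / x ^ 2) * gaussTail x
      = ∫ t in Ioi x, (1 + 1 / x ^ 2) * Real.exp (-(t ^ 2) / 2) := by
    rw [MeasureTheory.integral_const_mul]; rfl
  rw [this]
  refine setIntegral_mono_on (integrableOn_one_add_inv_sq x hx)
    (integrable_expsq.integrableOn.const_mul _) measurableSet_Ioi fun t ht => ?_
  have htx : x < t := ht
  have he := (Real.exp_pos (-(t ^ 2) / 2)).le
  have h2 : 1 / t ^ 2 ≤ 1 / x ^ 2 := by
    apply one_div_le_one_div_of_le (by positivity)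
    nlinarith
  nlinarith

lemma gaussTail_nonneg (x : ℝ) : 0 ≤ gaussTail x :=
  setIntegral_nonneg measurableSet_Ioi fun t _ => (Real.exp_pos _).le

lemma exp_cancel (x : ℝ) : Real.exp (-(x ^ 2) / 2) * Real.exp (x ^ 2 / 2) = 1 := by
  rw [← Real.exp_add, neg_div, neg_add_cancel, Real.exp_zero]

lemma mills : Tendsto (fun x : ℝ => gaussTail x * x * Real.exp (x ^ 2 / 2)) atTop (𝓝 1) := by
  have hlow : Tendsto (fun x : ℝ => 1 - 1 / (x ^ 2 + 1)) atTop (𝓝 1) := by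
    have h1 : Tendsto (fun x : ℝ => 1 / (x ^ 2 + 1)) atTop (𝓝 0) := by
      have h2 : Tendsto (fun x : ℝ => x ^ 2 + 1) atTop atTop :=
        tendsto_atTop_add_const_right _ 1 (tendsto_pow_atTop two_ne_zero)
      exact (tendsto_inv_atTop_zero.comp h2).congr fun x => (one_div _).symm
    simpa using (tendsto_const_nhds.sub h1)
  refine tendsto_of_tendsto_of_tendsto_of_le_of_le' hlow tendsto_const_nhds ?_ ?_
  · filter_upwards [eventually_gt_atTop (0 : ℝ)] with x hx
    have hA := Real.exp_pos (x ^ 2 / 2)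
    have hB := Real.exp_pos (-(x ^ 2) / 2)
    have hc := exp_cancel x
    have h := gaussTail_lower x hx
    have hE := gaussTail_nonneg x
    have hx2 : (0:ℝ) < x ^ 2 := by positivity
    -- from h : B / x ≤ (1 + 1/x^2) * E
    rw [div_le_iff₀ hx] at h
    -- B ≤ (1 + 1/x^2) * E * x
    have hmul := mul_le_mul_of_nonneg_right h hA.le
    rw [hc] at hmul
    -- 1 ≤ (1 + 1/x^2) * E * x * A
    have hxx : x ^ 2 * (1 / x ^ 2) = 1 := by field_simp
    have h3 : 1 - 1 / (x ^ 2 + 1) = x ^ 2 / (x ^ 2 + 1) := by field_simp; ring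
    rw [h3, div_le_iff₀ (by positivity : (0:ℝ) < x ^ 2 + 1)]
    nlinarith [mul_le_mul_of_nonneg_right hmul hx2.le, mul_nonneg (mul_nonneg hE hx.le) hA.le]
  · filter_upwards [eventually_gt_atTop (0 : ℝ)] with x hx
    have hA := Real.exp_pos (x ^ 2 / 2)
    have hc := exp_cancel x
    have h := gaussTail_upper x hx
    have hmul := mul_le_mul_of_nonneg_right
      (mul_le_mul_of_nonneg_right h hx.le) hA.le
    calc gaussTail x * x * Real.exp (x ^ 2 / 2) ≤ _ := hmul
      _ = 1 := by rw [div_mul_cancel₀ _ hx.ne', hc]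

noncomputable def phiTail (x : ℝ) : ℝ := ∫ t in Ioi x, stdPhi t

lemma phiTail_eq (x : ℝ) : phiTail x = (Real.sqrt (2 * Real.pi))⁻¹ * gaussTail x := by
  unfold phiTail gaussTail stdPhi
  rw [MeasureTheory.integral_const_mul]

lemma tendsto_phiTail_mul :
    Tendsto (fun x : ℝ => phiTail x * x * Real.exp (x ^ 2 / 2)) atTop
      (𝓝 ((Real.sqrt (2 * Real.pi))⁻¹)) := by
  have h := mills.const_mul ((Real.sqrt (2 * Real.pi))⁻¹)
  rw [mul_one] at h
  refine h.congr fun x => ?_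
  rw [phiTail_eq]; ring

lemma tail_upper (l x : ℝ) : (∫ t in Ioi x, snPdf l t) ≤ 2 * phiTail x := by
  have : 2 * phiTail x = ∫ t in Ioi x, 2 * stdPhi t := by
    rw [MeasureTheory.integral_const_mul]; rfl
  rw [this]
  refine setIntegral_mono_on (integrable_snPdf l).integrableOn
    ((integrable_stdPhi.const_mul 2).integrableOn) measurableSet_Ioi fun t _ => ?_
  unfold snPdf
  have h1 := stdCdf_le_one (l * t)
  have h2 := stdPhi_nonneg t
  nlinarith

lemma tail_lower (l x : ℝ) (hl : 0 < l) :
    2 * stdCdf (l * x) * phiTail x ≤ ∫ t in Ioi x, snPdf l t := by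
  have : 2 * stdCdf (l * x) * phiTail x
      = ∫ t in Ioi x, 2 * stdCdf (l * x) * stdPhi t := by
    rw [MeasureTheory.integral_const_mul]; rfl
  rw [this]
  refine setIntegral_mono_on
    ((integrable_stdPhi.const_mul _).integrableOn)
    (integrable_snPdf l).integrableOn measurableSet_Ioi fun t ht => ?_
  unfold snPdf
  have h1 : stdCdf (l * x) ≤ stdCdf (l * t) :=
    stdCdf_mono (by nlinarith [ht.out])
  have h2 := stdPhi_nonneg t
  nlinarith

lemma two_inv_sqrt : 2 * (Real.sqrt (2 * Real.pi))⁻¹ = Real.sqrt (2 / Real.pi) := by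
  have hπ : (0:ℝ) < π := Real.pi_pos
  have hs2 : Real.sqrt 2 * Real.sqrt 2 = 2 := Real.mul_self_sqrt (by norm_num)
  rw [Real.sqrt_div (by norm_num : (0:ℝ) ≤ 2) π,
    Real.sqrt_mul (by norm_num : (0:ℝ) ≤ 2)]
  have hsπ : 0 < Real.sqrt π := Real.sqrt_pos.mpr hπ
  have hs2' : 0 < Real.sqrt 2 := Real.sqrt_pos.mpr (by norm_num)
  field_simp
  nlinarith

theorem skew_normal_tail_pos (l : ℝ) (hl : 0 < l) :
    Tendsto (fun x : ℝ => (1 - snCdf l x) * x * Real.exp (x ^ 2 / 2)) atTop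
      (𝓝 (Real.sqrt (2 / Real.pi))) := by
  have hcdf : Tendsto (fun x : ℝ => stdCdf (l * x)) atTop (𝓝 1) :=
    tendsto_stdCdf_atTop.comp (Tendsto.const_mul_atTop hl tendsto_id)
  have hlow : Tendsto
      (fun x : ℝ => 2 * stdCdf (l * x) * (phiTail x * x * Real.exp (x ^ 2 / 2)))
      atTop (𝓝 (Real.sqrt (2 / Real.pi))) := by
    have h := ((tendsto_const_nhds (x := (2:ℝ))).mul hcdf).mul tendsto_phiTail_mul
    rw [show (2:ℝ) * 1 * (Real.sqrt (2 * Real.pi))⁻¹ = Real.sqrt (2 / Real.pi) by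
      rw [mul_one]; exact two_inv_sqrt] at h
    exact h
  have hup : Tendsto
      (fun x : ℝ => 2 * (phiTail x * x * Real.exp (x ^ 2 / 2)))
      atTop (𝓝 (Real.sqrt (2 / Real.pi))) := by
    have h := tendsto_phiTail_mul.const_mul (2:ℝ)
    rw [two_inv_sqrt] at h
    exact h
  refine tendsto_of_tendsto_of_tendsto_of_le_of_le' hlow hup ?_ ?_
  · filter_upwards [eventually_gt_atTop (0 : ℝ)] with x hx
    have h := tail_lower l x hl
    have hmul := mul_le_mul_of_nonneg_right h
      (mul_nonneg hx.le (Real.exp_pos (x ^ 2 / 2)).le)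
    rw [snCdf_tail]
    calc 2 * stdCdf (l * x) * (phiTail x * x * Real.exp (x ^ 2 / 2))
        = 2 * stdCdf (l * x) * phiTail x * (x * Real.exp (x ^ 2 / 2)) := by ring
      _ ≤ (∫ t in Ioi x, snPdf l t) * (x * Real.exp (x ^ 2 / 2)) := hmul
      _ = (∫ t in Ioi x, snPdf l t) * x * Real.exp (x ^ 2 / 2) := by ring
  · filter_upwards [eventually_gt_atTop (0 : ℝ)] with x hx
    have h := tail_upper l x
    have hmul := mul_le_mul_of_nonneg_right h
      (mul_nonneg hx.le (Real.exp_pos (x ^ 2 / 2)).le)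
    rw [snCdf_tail]
    calc (∫ t in Ioi x, snPdf l t) * x * Real.exp (x ^ 2 / 2)
        = (∫ t in Ioi x, snPdf l t) * (x * Real.exp (x ^ 2 / 2)) := by ring
      _ ≤ 2 * phiTail x * (x * Real.exp (x ^ 2 / 2)) := hmul
      _ = 2 * (phiTail x * x * Real.exp (x ^ 2 / 2)) := by ring
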